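/- For an invertible n×n complex matrix A (n ≥ 2), the spectral distortion SD(A) = |det A|^{1/n}/σ_min(A) satisfies SD(A) ≤ (‖A‖_F²/(n-1))^{(n-1)/2} · |det A|^{(1-n)/n}. -/

import Mathlib

open Finset Matrix
open scoped ComplexOrder

/-- The smallest singular value of a square complex matrix. -/
noncomputable def sigmaMin {n : ℕ} (A : Matrix (Fin n) (Fin n) ℂ) : ℝ :=
  Real.sqrt (⨅ i, (Matrix.isHermitian_conjTranspose_mul_self A).eigenvalues i)

set_option maxHeartbeats 2000000 in
/-- For an invertible `n×n` complex matrix `A` (`n ≥ 2`), the spectral distortion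
`SD(A) = |det A|^{1/n} / σ_min(A)` satisfies
`SD(A) ≤ (‖A‖_F²/(n-1))^((n-1)/2) · |det A|^((1-n)/n)`, where
`‖A‖_F² = Σᵢⱼ |aᵢⱼ|²` is the squared Frobenius norm. -/
theorem spectral_distortion_upper_bound (n : ℕ) (hn : 2 ≤ n)
    (A : Matrix (Fin n) (Fin n) ℂ) (hA : IsUnit A.det) :
    ‖A.det‖ ^ ((1 : ℝ) / (n : ℝ)) / sigmaMin A ≤
      ((∑ i, ∑ j, ‖A i j‖ ^ 2) / ((n : ℝ) - 1)) ^ (((n : ℝ) - 1) / 2) *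
        ‖A.det‖ ^ ((1 - (n : ℝ)) / (n : ℝ)) := by
  have hn0 : (0:ℝ) < n := by exact_mod_cast Nat.pos_of_ne_zero (by omega)
  have hn1 : (1:ℝ) < (n:ℝ) := by exact_mod_cast lt_of_lt_of_le one_lt_two hn
  haveI : Nonempty (Fin n) := ⟨⟨0, by omega⟩⟩
  set hB := Matrix.isHermitian_conjTranspose_mul_self A with hBdef
  set μ : Fin n → ℝ := hB.eigenvalues with hμ
  set T : ℝ := ∑ i, ∑ j, ‖A i j‖ ^ 2 with hT
  set d : ℝ := ‖A.det‖ with hd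
  set m : ℝ := (n:ℝ) - 1 with hm
  have hmpos : 0 < m := by rw [hm]; linarith
  have hT0 : 0 ≤ T := by
    rw [hT]
    exact Finset.sum_nonneg fun i _ => Finset.sum_nonneg fun j _ => sq_nonneg _
  have hdpos : 0 < d := by
    rw [hd]; exact (norm_pos_iff.mpr hA.ne_zero)
  have hnonneg : ∀ i, 0 ≤ μ i := fun i =>
    (Matrix.posSemidef_conjTranspose_mul_self A).eigenvalues_nonneg i
  -- trace equality
  have htr : (Matrix.trace (Aᴴ * A)) = ∑ i, (μ i : ℂ) := by
    conv_lhs => rw [hB.spectral_theorem, Unitary.conjStarAlgAut_apply]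
    rw [Matrix.trace_mul_cycle]
    rw [show (star (Matrix.IsHermitian.eigenvectorUnitary hB) : Matrix (Fin n) (Fin n) ℂ) *
      (Matrix.IsHermitian.eigenvectorUnitary hB : Matrix (Fin n) (Fin n) ℂ) = 1 from
      Matrix.mem_unitaryGroup_iff'.mp (Matrix.IsHermitian.eigenvectorUnitary hB).2]
    simp [Matrix.trace_diagonal]
    rfl
  have hsum : ∑ i, μ i = T := by
    have h2 : ((T:ℝ):ℂ) = Matrix.trace (Aᴴ * A) := by
      rw [hT, Matrix.trace]
      simp only [Matrix.diag_apply, Matrix.mul_apply, Matrix.conjTranspose_apply]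
      push_cast
      rw [Finset.sum_comm]
      refine Finset.sum_congr rfl fun j _ => Finset.sum_congr rfl fun i _ => ?_
      rw [← Complex.ofReal_pow, Complex.sq_norm, mul_comm, Complex.star_def, Complex.mul_conj]
    have h3 : ((T:ℝ):ℂ) = ((∑ i, μ i : ℝ) : ℂ) := by
      rw [h2, htr]; push_cast; rfl
    exact_mod_cast h3.symm
  -- product equality
  have hprod : ∏ i, μ i = d ^ 2 := by
    have h4 : Matrix.det (Aᴴ * A) = ((d^2 : ℝ) : ℂ) := by
      rw [Matrix.det_mul, Matrix.det_conjTranspose, Complex.star_def, mul_comm,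
        Complex.mul_conj, hd]
      norm_num [Complex.sq_norm]
    have h5 : Matrix.det (Aᴴ * A) = ∏ i, (μ i : ℂ) := hB.det_eq_prod_eigenvalues
    have h6 : ((∏ i, μ i : ℝ):ℂ) = ((d^2:ℝ):ℂ) := by
      rw [← h4, h5]; push_cast; rfl
    exact_mod_cast h6
  -- minimizer
  obtain ⟨i₀, hi₀⟩ := Finite.exists_min μ
  have hInf : (⨅ i, μ i) = μ i₀ :=
    le_antisymm (ciInf_le (Finite.bddBelow_range μ) i₀) (le_ciInf hi₀)
  have hσ : sigmaMin A = Real.sqrt (μ i₀) := by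
    have h11 : sigmaMin A = Real.sqrt (⨅ i, μ i) := rfl
    rw [h11, hInf]
  have hμ0 : 0 < μ i₀ := by
    rcases (hnonneg i₀).lt_or_eq with h | h
    · exact h
    · exfalso
      have : ∏ i, μ i = 0 := Finset.prod_eq_zero (Finset.mem_univ i₀) h.symm
      rw [hprod] at this
      nlinarith
  have hσpos : 0 < sigmaMin A := by rw [hσ]; exact Real.sqrt_pos.mpr hμ0
  -- AM-GM on the other eigenvalues
  set s : Finset (Fin n) := Finset.univ.erase i₀ with hs
  have hcard : ((s.card : ℕ) : ℝ) = m := by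
    rw [hs, Finset.card_erase_of_mem (Finset.mem_univ i₀), Finset.card_univ, Fintype.card_fin,
      hm, Nat.cast_sub (by omega)]
    norm_num
  set P : ℝ := ∏ i ∈ s, μ i with hP
  have hP0 : 0 ≤ P := Finset.prod_nonneg fun i _ => hnonneg i
  set S : ℝ := ∑ i ∈ s, μ i with hS
  have hST : S ≤ T := by
    rw [← hsum, hS]
    exact Finset.sum_le_sum_of_subset_of_nonneg (Finset.subset_univ s)
      (fun i _ _ => hnonneg i)
  have hS0 : 0 ≤ S := Finset.sum_nonneg fun i _ => hnonneg i
  have hgm : P ^ m⁻¹ ≤ S / m := by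
    have h7 := Real.geom_mean_le_arith_mean s (fun _ => (1:ℝ)) μ
      (fun _ _ => zero_le_one) (by simp [hcard]; linarith) (fun i _ => hnonneg i)
    simpa [Real.rpow_one, hcard, ← hP, ← hS] using h7
  have hPle : P ≤ (T / m) ^ m := by
    have h8 : (P ^ m⁻¹) ^ m ≤ (S / m) ^ m :=
      Real.rpow_le_rpow (Real.rpow_nonneg hP0 _) hgm hmpos.le
    have h9 : (P ^ m⁻¹) ^ m = P := by
      rw [← Real.rpow_mul hP0, inv_mul_cancel₀ hmpos.ne', Real.rpow_one]
    calc P = (P ^ m⁻¹) ^ m := h9.symm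
      _ ≤ (S / m) ^ m := h8
      _ ≤ (T / m) ^ m := by gcongr
  -- key inequality
  have hkey2 : d ^ 2 ≤ μ i₀ * (T / m) ^ m := by
    rw [← hprod, ← Finset.mul_prod_erase Finset.univ μ (Finset.mem_univ i₀), ← hs, ← hP]
    exact mul_le_mul_of_nonneg_left hPle hμ0.le
  have hkey : d ≤ sigmaMin A * (T / m) ^ (m / 2) := by
    have h10 : d = Real.sqrt (d ^ 2) := (Real.sqrt_sq hdpos.le).symm
    rw [h10, hσ]
    have hsq : Real.sqrt ((T / m) ^ m) = (T / m) ^ (m / 2) := by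
      rw [Real.sqrt_eq_rpow, ← Real.rpow_mul (div_nonneg hT0 hmpos.le)]
      ring_nf
    calc Real.sqrt (d ^ 2) ≤ Real.sqrt (μ i₀ * (T / m) ^ m) := Real.sqrt_le_sqrt hkey2
      _ = Real.sqrt (μ i₀) * Real.sqrt ((T / m) ^ m) := Real.sqrt_mul hμ0.le _
      _ = Real.sqrt (μ i₀) * (T / m) ^ (m / 2) := by rw [hsq]
  -- conclude
  rw [div_le_iff₀ hσpos]
  have e1 : d ^ ((1:ℝ)/(n:ℝ)) = d * d ^ ((1 - (n:ℝ))/(n:ℝ)) := by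
    rw [show (1:ℝ)/(n:ℝ) = 1 + (1 - (n:ℝ))/(n:ℝ) by field_simp; ring]
    rw [Real.rpow_add hdpos, Real.rpow_one]
  rw [e1]
  calc d * d ^ ((1 - (n:ℝ))/(n:ℝ))
      ≤ (sigmaMin A * (T / m) ^ (m / 2)) * d ^ ((1 - (n:ℝ))/(n:ℝ)) :=
        mul_le_mul_of_nonneg_right hkey (Real.rpow_nonneg hdpos.le _)
    _ = (T / m) ^ (m / 2) * d ^ ((1 - (n:ℝ))/(n:ℝ)) * sigmaMin A := by ring
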